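/- For A = [[2,−1,0.5],[−1,2,−1],[0.5,−1,2]], b = (2,−2,2), and ω = 1.9, the project-after-sweep iteration x^{k+1} = max(G_SOR x^k + c_SOR, 0) started from x⁰ = 0 satisfies x² = 0; i.e., the iteration is 2-periodic and fails to converge to the minimizer (0.8, 0, 0.8). -/

import Mathlib

open Matrix Filter

theorem stmt_15 (A : Matrix (Fin 3) (Fin 3) ℝ)
    (hA : A = !![2, -1, 0.5; -1, 2, -1; 0.5, -1, 2])
    (b : Fin 3 → ℝ) (hb : b = ![2, -2, 2])
    (ω : ℝ) (hω : ω = 1.9)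
    (D L U : Matrix (Fin 3) (Fin 3) ℝ)
    (hD : D = Matrix.diagonal fun i => A i i)
    (hL : L = fun i j => if j < i then A i j else 0)
    (hU : U = fun i j => if i < j then A i j else 0)
    (G : Matrix (Fin 3) (Fin 3) ℝ) (c : Fin 3 → ℝ)
    (hG : G = ((1 / ω) • D + L)⁻¹ * ((1 / ω - 1) • D - U))
    (hc : c = ((1 / ω) • D + L)⁻¹ *ᵥ b)
    (F : (Fin 3 → ℝ) → (Fin 3 → ℝ))
    (hF : F = fun x => fun i => max ((G *ᵥ x + c) i) 0) :
    F^[2] (0 : Fin 3 → ℝ) = 0 ∧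
    ¬ Tendsto (fun k => F^[k] (0 : Fin 3 → ℝ)) atTop (nhds ![0.8, 0, 0.8]) := by
  have hMval : (1 / ω) • D + L = !![20/19,0,0; -1,20/19,0; 1/2,-1,20/19] := by
    ext i j
    rw [Matrix.add_apply, Matrix.smul_apply]
    subst hA hω hD hL
    fin_cases i <;> fin_cases j <;>
      norm_num [Matrix.diagonal, Matrix.smul_apply] <;>
      norm_num [Fin.ext_iff, Fin.lt_def]
  have hM : ((1 / ω) • D + L)⁻¹
      = !![19/20,0,0; 361/400,19/20,0; 3249/8000,361/400,19/20] := by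
    rw [hMval]
    apply Matrix.inv_eq_right_inv
    ext i j
    fin_cases i <;> fin_cases j <;>
      norm_num [Matrix.mul_apply, Fin.sum_univ_three, Matrix.one_apply, Matrix.cons_val_two, Matrix.vecHead, Matrix.vecTail] <;>
      norm_num [Fin.ext_iff]
  have hKval : (1 / ω - 1) • D - U = !![-18/19,1,-1/2; 0,-18/19,1; 0,0,-18/19] := by
    ext i j
    rw [Matrix.sub_apply, Matrix.smul_apply]
    subst hA hω hD hU
    fin_cases i <;> fin_cases j <;>
      norm_num [Matrix.diagonal, Matrix.smul_apply] <;>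
      norm_num [Fin.ext_iff, Fin.lt_def]
  have hcval : c = ![19/10, -19/200, 3629/4000] := by
    rw [hc, hM, hb]
    ext i
    fin_cases i <;>
      norm_num [Matrix.mulVec, dotProduct, Fin.sum_univ_three, Matrix.cons_val_two, Matrix.vecHead, Matrix.vecTail]
  have hGval : G = !![-9/10,19/20,-19/40; -171/200,1/400,399/800;
      -1539/4000,-3591/8000,-3209/16000] := by
    rw [hG, hM, hKval]
    ext i j
    fin_cases i <;> fin_cases j <;>
      norm_num [Matrix.mul_apply, Fin.sum_univ_three, Matrix.cons_val_two, Matrix.vecHead, Matrix.vecTail] <;>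
      rfl
  have h1 : F 0 = ![19/10, 0, 3629/4000] := by
    rw [hF]
    ext i
    simp only [Matrix.mulVec_zero, zero_add, hcval]
    fin_cases i <;> norm_num
  have h2 : F^[2] (0 : Fin 3 → ℝ) = 0 := by
    rw [Function.iterate_succ, Function.iterate_one, Function.comp_apply, h1, hF]
    ext i
    fin_cases i <;>
      norm_num [hGval, hcval, Matrix.mulVec, dotProduct, Fin.sum_univ_three,
        Pi.zero_apply] <;>
      rw [max_eq_right (by norm_num)]
  refine ⟨h2, fun hT => ?_⟩
  have heven : ∀ k, F^[2*k] (0 : Fin 3 → ℝ) = 0 := by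
    intro k
    induction k with
    | zero => simp
    | succ n ih =>
      have : 2 * (n+1) = 2 * n + 2 := by ring
      rw [this, Function.iterate_add_apply, h2, ih]
  have hT2 : Tendsto (fun k => F^[2*k] (0 : Fin 3 → ℝ)) atTop (nhds ![0.8, 0, 0.8]) :=
    hT.comp (tendsto_atTop_atTop_of_monotone (fun a b h => by omega)
      (fun n => ⟨n, by omega⟩))
  rw [funext heven] at hT2
  have h := tendsto_nhds_unique hT2 tendsto_const_nhds
  have h0 := congrFun h 0
  norm_num at h0
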